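/- Let ⟨s, t⟩ be a superbubble with vertex set U in a directed acyclic graph G with a single source, and let ordD be a topological ordering obtained by depth-first topological sort whose associated spanning tree T (rooted at the source) assigns contiguous order intervals to subtrees. Then for every vertex y ∉ U, either ordD[y] < ordD[s] or ordD[y] > ordD[t]. -/

import Mathlib

/-- `v` is reachable from `s` by a directed path whose internal vertices
(all vertices except the endpoints) avoid `avoid`. -/
def ReachWithout {V : Type*} (E : V → V → Prop) (avoid s v : V) : Prop :=
  s = v ∨ ∃ w, Relation.ReflTransGen (fun a b => E a b ∧ b ≠ avoid) s w ∧ E w v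

/-- `t` is reachable from `v` by a directed path whose internal vertices avoid `avoid`. -/
def CoReachWithout {V : Type*} (E : V → V → Prop) (avoid v t : V) : Prop :=
  v = t ∨ ∃ w, E v w ∧ Relation.ReflTransGen (fun a b => E a b ∧ a ≠ avoid) w t

/-- The subgraph induced by `U` is acyclic. -/
def AcyclicOn {V : Type*} (E : V → V → Prop) (U : Set V) : Prop :=
  ∀ v, ¬ Relation.TransGen (fun a b => E a b ∧ a ∈ U ∧ b ∈ U) v v

/-- The directed graph is acyclic. -/
def Acyclic {V : Type*} (E : V → V → Prop) : Prop :=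
  ∀ v, ¬ Relation.TransGen E v v

/-- The reachability, matching and acyclicity conditions of a superbubble
(Definition 1, without minimality). -/
def SBCore {V : Type*} (E : V → V → Prop) (s t : V) : Prop :=
  s ≠ t ∧ Relation.TransGen E s t ∧
  (∀ v, ReachWithout E t s v ↔ CoReachWithout E s v t) ∧
  AcyclicOn E {v | ReachWithout E t s v}

/-- `⟨s, t⟩` is a superbubble: reachability, matching, acyclicity and minimality. -/
def Superbubble {V : Type*} (E : V → V → Prop) (s t : V) : Prop :=
  SBCore E s t ∧ ∀ t', ReachWithout E t s t' → t' ≠ t → ¬ SBCore E s t'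

/-- Let ⟨s, t⟩ be a superbubble with vertex set U in a DAG with a single source and
single sink, and let ordD be a topological ordering produced by depth-first topological
sort (its spanning tree T assigns contiguous order intervals to subtrees). Then every
vertex not in U has order smaller than that of s or greater than that of t. -/
theorem superbubble_exterior_order {V : Type*} [Fintype V] (E T : V → V → Prop) (root : V)
    (hA : Acyclic E)
    (hSource : ∃! r : V, ∀ u, ¬ E u r)
    (hSink : ∃! q : V, ∀ u, ¬ E q u)
    (hTE : ∀ a b, T a b → E a b)
    (hRoot : ∀ u, ¬ E u root)
    (hSpan : ∀ v, Relation.ReflTransGen T root v)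
    (ordD : V → ℕ) (hinj : Function.Injective ordD)
    (htopo : ∀ a b, E a b → ordD a < ordD b)
    (hInterval : ∀ v : V, ∃ k : ℕ, ∀ x : V,
      Relation.ReflTransGen T v x ↔ ordD v ≤ ordD x ∧ ordD x ≤ k)
    (s t : V) (hSB : Superbubble E s t)
    (y : V) (hyU : ¬ ReachWithout E t s y) :
    ordD y < ordD s ∨ ordD t < ordD y := by
  obtain ⟨⟨hst, hreach, hmatch, hacyc⟩, hmin⟩ := hSB
  -- ord is monotone along E-paths
  have hmono : ∀ a b, Relation.ReflTransGen E a b → ordD a ≤ ordD b := by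
    intro a b h
    induction h with
    | refl => exact le_refl _
    | tail _ hbc ih => exact ih.trans (htopo _ _ hbc).le
  have hTmono : ∀ a b, Relation.ReflTransGen T a b → ordD a ≤ ordD b := fun a b h =>
    hmono a b (Relation.ReflTransGen.mono (fun x y hxy => hTE x y hxy) _ _ h)
  -- every vertex of U has order at least ordD s
  have hsle : ∀ v, ReachWithout E t s v → ordD s ≤ ordD v := by
    intro v hv
    rcases hv with rfl | ⟨w, hw, hwv⟩
    · exact le_refl _
    · exact (hmono s w (Relation.ReflTransGen.mono (fun a b h => h.1) _ _ hw)).trans (htopo _ _ hwv).le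
  -- U is closed under out-edges from vertices ≠ t
  have hout : ∀ v w, ReachWithout E t s v → v ≠ t → E v w → ReachWithout E t s w := by
    intro v w hv hvt hvw
    rcases hv with rfl | ⟨u, hu, huv⟩
    · exact Or.inr ⟨s, Relation.ReflTransGen.refl, hvw⟩
    · exact Or.inr ⟨v, hu.tail ⟨huv, hvt⟩, hvw⟩
  -- t itself belongs to U
  have htU : ReachWithout E t s t := by
    have key : ∀ v, Relation.ReflTransGen E s v →
        ReachWithout E t s v ∨ ReachWithout E t s t := by
      intro v h
      induction h with
      | refl => exact Or.inl (Or.inl rfl)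
      | @tail b c hsb hbc ih =>
        rcases ih with hv | ht
        · by_cases hbt : b = t
          · subst hbt; exact Or.inr hv
          · exact Or.inl (hout b c hv hbt hbc)
        · exact Or.inr ht
    rcases key t hreach.to_reflTransGen with h | h
    · exact h
    · exact h
  -- U is closed under in-edges into vertices ≠ s
  have hin : ∀ v w, ReachWithout E t s w → w ≠ s → E v w → ReachWithout E t s v := by
    intro v w hw hws hvw
    have hw' : CoReachWithout E s w t := (hmatch w).1 hw
    have hpath : Relation.ReflTransGen (fun a b => E a b ∧ a ≠ s) w t := by
      rcases hw' with rfl | ⟨x, hwx, hx⟩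
      · exact Relation.ReflTransGen.refl
      · exact Relation.ReflTransGen.head ⟨hwx, hws⟩ hx
    exact (hmatch v).2 (Or.inr ⟨w, hvw, hpath⟩)
  -- every vertex of U is a tree descendant of s; in particular t is
  have hanc : ∀ v, Relation.ReflTransGen T root v → ReachWithout E t s v →
      Relation.ReflTransGen T s v := by
    intro v h
    induction h with
    | refl =>
      intro hr
      have h1 : ordD s ≤ ordD root := hsle root hr
      have h2 : ordD root ≤ ordD s := hTmono root s (hSpan s)
      have hrs : root = s := hinj (le_antisymm h2 h1)
      rw [hrs]
    | @tail a b ha hab ih =>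
      intro hb
      by_cases hbs : b = s
      · subst hbs; exact Relation.ReflTransGen.refl
      · exact (ih (hin a b hb hbs (hTE a b hab))).tail hab
  have hst' : Relation.ReflTransGen T s t := hanc t (hSpan t) htU
  -- interval of the subtree of s
  obtain ⟨k, hk⟩ := hInterval s
  have hks : ordD t ≤ k := ((hk t).1 hst').2
  by_contra hcon
  push_neg at hcon
  obtain ⟨h1, h2⟩ := hcon
  have hsy : Relation.ReflTransGen T s y := (hk y).2 ⟨h1, h2.trans hks⟩
  -- a tree path from s staying below ordD t avoids t internally
  have hrestrict : ∀ w, Relation.ReflTransGen T s w → ordD w < ordD t →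
      Relation.ReflTransGen (fun a b => E a b ∧ b ≠ t) s w := by
    intro w h
    induction h with
    | refl => intro _; exact Relation.ReflTransGen.refl
    | @tail a b ha hab ih =>
      intro hb
      have hab' := htopo a b (hTE a b hab)
      exact (ih (hab'.trans hb)).tail
        ⟨hTE a b hab, fun hbt => by subst hbt; exact lt_irrefl _ hb⟩
  rcases hsy.cases_tail with heq | ⟨w, hsw, hwy⟩
  · exact hyU (Or.inl heq.symm)
  · have hwy' := htopo w y (hTE w y hwy)
    exact hyU (Or.inr ⟨w, hrestrict w hsw (hwy'.trans_le h2), hTE w y hwy⟩)
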